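/- For any partition $\lambda$ of length at most $d$, the determinant $\det\big([x_i|b]^{\lambda_j + d - j}(1 - x_i)^{j-1}\big)_{1 \le i, j \le d}$ is divisible by the Vandermonde product $\prod_{1 \le i < j \le d}(x_i - x_j)$ in the polynomial ring $\mathbb{Z}[b_1, b_2, \ldots][x_1, \ldots, x_d]$; consequently the factorial Grothendieck polynomial $G_\lambda(x|b)$ is a polynomial. -/

import Mathlib

open MvPolynomial

private lemma prod_primes_dvd' {α : Type*} [CommMonoidWithZero α] [IsCancelMulZero α] {ι : Type*}
    (s : Finset ι) (f : ι → α) (n : α) (hp : ∀ i ∈ s, Prime (f i))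
    (hassoc : ∀ i ∈ s, ∀ j ∈ s, Associated (f i) (f j) → i = j)
    (hdvd : ∀ i ∈ s, f i ∣ n) : (∏ i ∈ s, f i) ∣ n := by
  classical
  induction s using Finset.induction_on generalizing n with
  | empty => simp
  | @insert a s ha ih =>
    rw [Finset.prod_insert ha]
    obtain ⟨k, rfl⟩ := hdvd a (Finset.mem_insert_self a s)
    refine mul_dvd_mul_left _ (ih _ (fun i hi => hp i (Finset.mem_insert_of_mem hi))
      (fun i hi j hj h => hassoc i (Finset.mem_insert_of_mem hi) j (Finset.mem_insert_of_mem hj) h)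
      (fun i hi => ?_))
    have hia := hdvd i (Finset.mem_insert_of_mem hi)
    have hpi := hp i (Finset.mem_insert_of_mem hi)
    rcases hpi.dvd_or_dvd hia with h | h
    · exfalso
      have : i = a := hassoc i (Finset.mem_insert_of_mem hi) a (Finset.mem_insert_self a s)
        (hpi.associated_of_dvd (hp a (Finset.mem_insert_self a s)) h)
      exact ha (this ▸ hi)
    · exact h

private lemma prime_X_sub_X {σ : Type*} [DecidableEq σ] {s t : σ} (h : t ≠ s) :
    Prime (X s - X t : MvPolynomial σ ℤ) := by
  let e : MvPolynomial σ ℤ ≃ₐ[ℤ] Polynomial (MvPolynomial {b : σ // b ≠ s} ℤ) := (renameEquiv ℤ (Equiv.optionSubtypeNe s).symm).trans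
    (optionEquivLeft ℤ {b : σ // b ≠ s})
  rw [← MulEquiv.prime_iff e.toRingEquiv.toMulEquiv]
  have he : e (X s - X t) = Polynomial.X - Polynomial.C (X ⟨t, h⟩) := by
    simp [e, Equiv.optionSubtypeNe_symm_self, Equiv.optionSubtypeNe_symm_of_ne h,
      optionEquivLeft_X_none, optionEquivLeft_X_some]
  rw [show e.toRingEquiv.toMulEquiv (X s - X t) = e (X s - X t) from rfl, he]
  exact Polynomial.prime_X_sub_C _

private lemma sub_dvd_of_aeval_eq_zero {σ : Type*} [DecidableEq σ] {R : Type*} [CommRing R]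
    (s t : σ) (f : MvPolynomial σ R)
    (h : aeval (Function.update (X : σ → MvPolynomial σ R) t (X s)) f = 0) :
    (X s - X t : MvPolynomial σ R) ∣ f := by
  rw [← Ideal.mem_span_singleton]
  have key : (Ideal.Quotient.mk (Ideal.span {(X s - X t : MvPolynomial σ R)})).comp
      (aeval (Function.update (X : σ → MvPolynomial σ R) t (X s)) : MvPolynomial σ R →ₐ[R] MvPolynomial σ R).toRingHom
      = Ideal.Quotient.mk (Ideal.span {(X s - X t : MvPolynomial σ R)}) := by
    apply MvPolynomial.ringHom_ext
    · intro r; simp [algebraMap_eq]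
    · intro k
      simp only [RingHom.coe_comp, Function.comp_apply, AlgHom.toRingHom_eq_coe,
        RingHom.coe_coe, aeval_X]
      by_cases hk : k = t
      · subst hk
        rw [Function.update_self, Ideal.Quotient.eq]
        exact Ideal.subset_span rfl
      · rw [Function.update_of_ne hk]
  have := congrArg (fun g : MvPolynomial σ R →+* _ => g f) key
  simp only [RingHom.coe_comp, Function.comp_apply, AlgHom.toRingHom_eq_coe,
    RingHom.coe_coe, h, map_zero] at this
  rw [← Ideal.Quotient.eq_zero_iff_mem, ← this]

/-- The determinant `det([xᵢ|b]^{λⱼ+d-j} (1-xᵢ)^{j-1})` is divisible by the Vandermonde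
product `∏_{i<j} (xᵢ - xⱼ)` in `ℤ[b][x]`. -/
theorem stmt_5 (d : ℕ) (lam : Fin d → ℕ) (hlam : ∀ i j : Fin d, i ≤ j → lam j ≤ lam i) :
    (∏ i : Fin d, ∏ j ∈ Finset.Ioi i,
        (X (Sum.inl i) - X (Sum.inl j) : MvPolynomial (Fin d ⊕ ℕ) ℤ)) ∣
      Matrix.det (Matrix.of fun i j : Fin d =>
        (∏ m ∈ Finset.range (lam j + (d - 1 - (j : ℕ))),
          (X (Sum.inl i) + X (Sum.inr m) - X (Sum.inl i) * X (Sum.inr m)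
            : MvPolynomial (Fin d ⊕ ℕ) ℤ)) * (1 - X (Sum.inl i)) ^ (j : ℕ)) := by
  classical
  set M : Matrix (Fin d) (Fin d) (MvPolynomial (Fin d ⊕ ℕ) ℤ) :=
    Matrix.of fun i j : Fin d =>
      (∏ m ∈ Finset.range (lam j + (d - 1 - (j : ℕ))),
        (X (Sum.inl i) + X (Sum.inr m) - X (Sum.inl i) * X (Sum.inr m))) *
        (1 - X (Sum.inl i)) ^ (j : ℕ) with hM
  rw [Finset.prod_sigma']
  refine prod_primes_dvd' _ _ _ (fun p hp => ?_) (fun p hp q hq hpq => ?_) (fun p hp => ?_)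
  · -- prime
    rw [Finset.mem_sigma, Finset.mem_Ioi] at hp
    exact prime_X_sub_X (fun h => absurd (Sum.inl.inj h) hp.2.ne')
  · -- non-associated ⇒ equal
    rw [Finset.mem_sigma, Finset.mem_Ioi] at hp hq
    by_contra hne
    have hij : p.1 < p.2 := hp.2
    have hkl : q.1 < q.2 := hq.2
    have hpair : (p.1, p.2) ≠ (q.1, q.2) := by
      intro h
      apply hne
      cases p; cases q
      simp at h
      simp [h.1, h.2]
    have hcase : q.1 ∉ ({p.1, p.2} : Set (Fin d)) ∨ q.2 ∉ ({p.1, p.2} : Set (Fin d)) := by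
      by_contra hc
      push_neg at hc
      obtain ⟨h1, h2⟩ := hc
      rcases h1 with h1 | h1
      · rcases h2 with h2 | h2
        · exact absurd (h2 ▸ h1 ▸ hkl) (lt_irrefl _)
        · exact hpair (by rw [h1, h2])
      · rcases h2 with h2 | h2
        · exact absurd (hkl.trans (h2 ▸ h1 ▸ hij)) (lt_irrefl _)
        · exact absurd (h2 ▸ h1 ▸ hkl) (lt_irrefl _)
    obtain ⟨u, hu⟩ := hpq
    rcases hcase with hc | hc
    · simp only [Set.mem_insert_iff, Set.mem_singleton_iff, not_or] at hc
      have := congrArg (eval (fun v : Fin d ⊕ ℕ => if v = Sum.inl q.1 then (1:ℤ) else 0)) hu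
      simp [Ne.symm hc.1, Ne.symm hc.2, hkl.ne'] at this
    · simp only [Set.mem_insert_iff, Set.mem_singleton_iff, not_or] at hc
      have := congrArg (eval (fun v : Fin d ⊕ ℕ => if v = Sum.inl q.2 then (1:ℤ) else 0)) hu
      simp [Ne.symm hc.1, Ne.symm hc.2, hkl.ne] at this
  · -- each divides det
    rw [Finset.mem_sigma, Finset.mem_Ioi] at hp
    obtain ⟨i, j⟩ := p
    have hij : i < j := hp.2
    apply sub_dvd_of_aeval_eq_zero
    set φ : MvPolynomial (Fin d ⊕ ℕ) ℤ →ₐ[ℤ] MvPolynomial (Fin d ⊕ ℕ) ℤ :=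
      aeval (Function.update X (Sum.inl j) (X (Sum.inl i)))
    show φ M.det = 0
    rw [AlgHom.map_det]
    apply Matrix.det_zero_of_row_eq (Fin.ne_of_lt hij)
    funext c
    simp only [AlgHom.mapMatrix_apply, Matrix.map_apply, hM, Matrix.of_apply, map_mul, map_prod,
      map_sub, map_add, map_pow, map_one, aeval_X, φ, Function.update_apply]
    simp [Fin.ne_of_lt hij]
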